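/- Let F : ℝ^{n−1} → ℝ^{n−1} map β = (β_2,…,β_n) to φ with φ_a := Σ_{k=2}^n β_k · C(n−a−1, k−2) for a = 1,…,n−1, and let B*_n := (0,∞) × ℝ₊^{n−2}. Then F(B*_n) = { φ ∈ (0,∞)^{n−1} : for all integers k with 0 ≤ k < n and all integers j with 1 ≤ j < n−k, (−1)^k (Δ^k φ)_j ≥ 0 }, where (Δ^k f)_j := Σ_{i=0}^k (−1)^{i+k} C(k,i) f(j+i). -/

import Mathlib

open Finset

noncomputable section

/-- `i >_σ j`: candidate `i` is ranked above candidate `j` by `σ`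
(where `σ i` is the candidate in position `i`). -/
def prefOver {n : ℕ} (σ : Equiv.Perm (Fin n)) (i j : Fin n) : Prop :=
  σ.symm i < σ.symm j

/-- `M(S,σ)`: the set of `>_σ`-maximal elements of `S` (a singleton when `S ≠ ∅`). -/
def bestSet {n : ℕ} (σ : Equiv.Perm (Fin n)) (S : Finset (Fin n)) : Finset (Fin n) :=
  S.filter fun x => ∀ y ∈ S, σ.symm x ≤ σ.symm y

/-- `△_S(σ,π) = M(S,σ) △ M(S,π)`. -/
def topDiff {n : ℕ} (σ π : Equiv.Perm (Fin n)) (S : Finset (Fin n)) : Finset (Fin n) :=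
  symmDiff (bestSet σ S) (bestSet π S)

/-- The `(β,μ)`-top-difference distance; `β i` is the weight of menus of size `i+2`. -/
def dTD (n : ℕ) (β : Fin (n - 1) → ℝ) (μ : Fin n → ℝ)
    (σ π : Equiv.Perm (Fin n)) : ℝ :=
  ∑ S ∈ Finset.univ.filter (fun S : Finset (Fin n) => 2 ≤ S.card),
    (if h : S.card - 2 < n - 1 then β ⟨S.card - 2, h⟩ else 0) *
      ∑ x ∈ topDiff σ π S, μ x

def IsSemimetric {α : Type*} (d : α → α → ℝ) : Prop :=
  (∀ x y, 0 ≤ d x y) ∧ (∀ x y, d x y = d y x) ∧ (∀ x, d x x = 0) ∧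
    (∀ x y z, d x z ≤ d x y + d y z)

def IsMetricFn {α : Type*} (d : α → α → ℝ) : Prop :=
  IsSemimetric d ∧ ∀ x y, d x y = 0 → x = y

/-- `F(β)_a = Σ_{k=2}^n β_k C(n-a-1, k-2)` for `a = 1,…,n-1`;
index `a : Fin (n-1)` encodes the position `a.1 + 1`. -/
def Fmap (n : ℕ) (β : Fin (n - 1) → ℝ) : Fin (n - 1) → ℝ :=
  fun a => ∑ k : Fin (n - 1), β k * (Nat.choose (n - (a.1 + 1) - 1) k.1 : ℝ)

/-- `(Δ^k f)_j = Σ_{i=0}^k (−1)^{i+k} C(k,i) f(j+i)`. -/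
def finDiff (k j : ℕ) (f : ℕ → ℝ) : ℝ :=
  ∑ i ∈ Finset.range (k + 1), (-1 : ℝ) ^ (i + k) * (Nat.choose k i : ℝ) * f (j + i)

/-- Extension of `φ = (φ_1,…,φ_{n-1})` to a function on `ℕ` (`φ j` for `1 ≤ j ≤ n-1`). -/
def phiExt (n : ℕ) (φ : Fin (n - 1) → ℝ) (j : ℕ) : ℝ :=
  if h : j - 1 < n - 1 then φ ⟨j - 1, h⟩ else 0

namespace S9

def D (g : ℕ → ℝ) (k j : ℕ) : ℝ := (-1 : ℝ) ^ k * finDiff k j g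

lemma D_zero (g : ℕ → ℝ) (j : ℕ) : D g 0 j = g j := by
  simp [D, finDiff]

lemma finDiff_succ (g : ℕ → ℝ) (k j : ℕ) :
    finDiff (k + 1) j g = finDiff k (j + 1) g - finDiff k j g := by
  unfold finDiff
  rw [Finset.sum_range_succ'
    (fun i => (-1 : ℝ) ^ (i + (k + 1)) * (Nat.choose (k + 1) i : ℝ) * g (j + i)) (k + 1)]
  have h1 : ∀ i ∈ Finset.range (k + 1),
      (-1 : ℝ) ^ (i + 1 + (k + 1)) * (Nat.choose (k + 1) (i + 1) : ℝ) * g (j + (i + 1))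
      = (-1 : ℝ) ^ (i + k) * (Nat.choose k i : ℝ) * g (j + 1 + i)
        + (-1 : ℝ) ^ (i + k) * (Nat.choose k (i + 1) : ℝ) * g (j + (i + 1)) := by
    intro i _
    have hc : ((k + 1).choose (i + 1) : ℝ) = (k.choose i : ℝ) + (k.choose (i + 1) : ℝ) := by
      exact_mod_cast congrArg (Nat.cast : ℕ → ℝ) (Nat.choose_succ_succ k i)
    have hp : (-1 : ℝ) ^ (i + 1 + (k + 1)) = (-1 : ℝ) ^ (i + k) := by
      have : i + 1 + (k + 1) = (i + k) + 2 := by omega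
      rw [this, pow_add]; ring
    have hg : j + 1 + i = j + (i + 1) := by omega
    rw [hc, hp, hg]; ring
  rw [Finset.sum_congr rfl h1, Finset.sum_add_distrib]
  have h2 : ∑ i ∈ Finset.range (k + 1), (-1 : ℝ) ^ (i + k) * (Nat.choose k (i + 1) : ℝ) * g (j + (i + 1))
      = ∑ i ∈ Finset.range k, (-1 : ℝ) ^ (i + k) * (Nat.choose k (i + 1) : ℝ) * g (j + (i + 1)) := by
    rw [Finset.sum_range_succ, Nat.choose_succ_self]; simp
  rw [h2]
  rw [Finset.sum_range_succ'
    (fun i => (-1 : ℝ) ^ (i + k) * (Nat.choose k i : ℝ) * g (j + i)) k]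
  have h4 : ∑ i ∈ Finset.range k, (-1 : ℝ) ^ (i + k) * (Nat.choose k (i + 1) : ℝ) * g (j + (i + 1))
      = -∑ i ∈ Finset.range k, (-1 : ℝ) ^ (i + 1 + k) * (Nat.choose k (i + 1) : ℝ) * g (j + (i + 1)) := by
    rw [← Finset.sum_neg_distrib]
    apply Finset.sum_congr rfl
    intro i _
    have : i + 1 + k = (i + k) + 1 := by omega
    rw [this, pow_succ]; ring
  rw [h4]
  have h5 : (-1 : ℝ) ^ (0 + (k + 1)) * (Nat.choose (k + 1) 0 : ℝ) * g (j + 0)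
      = -((-1 : ℝ) ^ (0 + k) * (Nat.choose k 0 : ℝ) * g (j + 0)) := by
    simp [pow_succ]
  rw [h5]
  ring

lemma D_rec (g : ℕ → ℝ) (k j : ℕ) : D g k j = D g k (j + 1) + D g (k + 1) j := by
  unfold D
  rw [finDiff_succ]
  ring

lemma D_inv (g : ℕ → ℝ) : ∀ t k j, D g k j =
    ∑ s ∈ Finset.range (t + 1), (Nat.choose t s : ℝ) * D g (k + s) (j + t - s) := by
  intro t
  induction t with
  | zero => intro k j; simp
  | succ t ih =>
    intro k j
    rw [D_rec g k j, ih k (j + 1), ih (k + 1) j]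
    rw [Finset.sum_range_succ'
      (fun s => (Nat.choose (t + 1) s : ℝ) * D g (k + s) (j + (t + 1) - s)) (t + 1)]
    have e1 : ∀ s ∈ Finset.range (t + 1),
        (Nat.choose (t + 1) (s + 1) : ℝ) * D g (k + (s + 1)) (j + (t + 1) - (s + 1))
        = (Nat.choose t s : ℝ) * D g (k + 1 + s) (j + t - s)
          + (Nat.choose t (s + 1) : ℝ) * D g (k + (s + 1)) (j + t - s) := by
      intro s _
      have hc : ((t + 1).choose (s + 1) : ℝ) = (t.choose s : ℝ) + (t.choose (s + 1) : ℝ) := by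
        exact_mod_cast congrArg (Nat.cast : ℕ → ℝ) (Nat.choose_succ_succ t s)
      have ha : j + (t + 1) - (s + 1) = j + t - s := by omega
      have hb : k + (s + 1) = k + 1 + s := by omega
      rw [hc, ha, hb]; ring
    rw [Finset.sum_congr rfl e1, Finset.sum_add_distrib]
    have e2 : ∑ s ∈ Finset.range (t + 1), (Nat.choose t (s + 1) : ℝ) * D g (k + (s + 1)) (j + t - s)
        = ∑ s ∈ Finset.range t, (Nat.choose t (s + 1) : ℝ) * D g (k + (s + 1)) (j + t - s) := by
      rw [Finset.sum_range_succ, Nat.choose_succ_self]; simp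
    have e3 : ∑ s ∈ Finset.range (t + 1), (Nat.choose t s : ℝ) * D g (k + s) (j + 1 + t - s)
        = ∑ s ∈ Finset.range t, (Nat.choose t (s + 1) : ℝ) * D g (k + (s + 1)) (j + t - s)
          + (Nat.choose (t + 1) 0 : ℝ) * D g (k + 0) (j + (t + 1) - 0) := by
      rw [Finset.sum_range_succ'
        (fun s => (Nat.choose t s : ℝ) * D g (k + s) (j + 1 + t - s)) t]
      congr 1
      · apply Finset.sum_congr rfl
        intro s hs
        have : j + 1 + t - (s + 1) = j + t - s := by omega
        rw [this]
      · have h0 : j + 1 + t - 0 = j + (t + 1) - 0 := by omega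
        simp [h0]
    rw [e2]
    linarith [e3]

end S9


namespace S9

lemma forward_id (n : ℕ) (hn : 2 ≤ n) (β : Fin (n - 1) → ℝ) :
    ∀ k j, 1 ≤ j → j + k ≤ n - 1 →
      D (phiExt n (Fmap n β)) k j
        = ∑ r : Fin (n - 1), β r *
            (if k ≤ r.1 then ((n - 1 - k - j).choose (r.1 - k) : ℝ) else 0) := by
  intro k
  induction k with
  | zero =>
    intro j hj1 hj2
    rw [D_zero]
    unfold phiExt
    rw [dif_pos (show j - 1 < n - 1 by omega)]
    unfold Fmap
    apply Finset.sum_congr rfl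
    intro r _
    have h : n - ((j - 1) + 1) - 1 = n - 1 - 0 - j := by omega
    rw [h]
    simp
  | succ k ih =>
    intro j hj1 hj2
    have h1 := D_rec (phiExt n (Fmap n β)) k j
    have h2 := ih j hj1 (by omega)
    have h3 := ih (j + 1) (by omega) (by omega)
    have h4 : D (phiExt n (Fmap n β)) (k + 1) j
        = D (phiExt n (Fmap n β)) k j - D (phiExt n (Fmap n β)) k (j + 1) := by
      linarith [h1]
    rw [h4, h2, h3, ← Finset.sum_sub_distrib]
    apply Finset.sum_congr rfl
    intro r _
    by_cases hk : k + 1 ≤ r.1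
    · rw [if_pos hk, if_pos (by omega : k ≤ r.1), if_pos (by omega : k ≤ r.1)]
      obtain ⟨m, hm⟩ : ∃ m, n - 1 - k - j = m + 1 := ⟨n - 2 - k - j, by omega⟩
      obtain ⟨s, hs⟩ : ∃ s, r.1 - k = s + 1 := ⟨r.1 - (k + 1), by omega⟩
      have e1 : n - 1 - k - (j + 1) = m := by omega
      have e2 : n - 1 - (k + 1) - j = m := by omega
      have e3 : r.1 - (k + 1) = s := by omega
      rw [hm, hs, e1, e2, e3, Nat.choose_succ_succ]
      push_cast; ring
    · rw [if_neg hk]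
      by_cases hk2 : k ≤ r.1
      · rw [if_pos hk2, if_pos hk2]
        have e : r.1 - k = 0 := by omega
        rw [e]
        simp
      · rw [if_neg hk2, if_neg hk2]; ring

end S9

theorem stmt9 (n : ℕ) (hn : 2 ≤ n) (φ : Fin (n - 1) → ℝ) :
    (∃ β : Fin (n - 1) → ℝ,
      ((∀ k : Fin (n - 1), k.1 = 0 → 0 < β k) ∧
        (∀ k : Fin (n - 1), k.1 ≠ 0 → 0 ≤ β k)) ∧ Fmap n β = φ) ↔
      ((∀ a, 0 < φ a) ∧
        ∀ k j : ℕ, k < n → 1 ≤ j → j < n - k →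
          0 ≤ (-1 : ℝ) ^ k * finDiff k j (phiExt n φ)) := by
  constructor
  · rintro ⟨β, ⟨hb0, hb1⟩, rfl⟩
    have hbnn : ∀ r : Fin (n - 1), 0 ≤ β r := by
      intro r
      by_cases h : r.1 = 0
      · exact le_of_lt (hb0 r h)
      · exact hb1 r h
    constructor
    · intro a
      have h0 : (0 : ℕ) < n - 1 := by omega
      have key : β ⟨0, h0⟩ * (Nat.choose (n - (a.1 + 1) - 1) (0 : ℕ) : ℝ) ≤ Fmap n β a := by
        unfold Fmap
        exact Finset.single_le_sum
          (f := fun r : Fin (n - 1) => β r * (Nat.choose (n - (a.1 + 1) - 1) r.1 : ℝ))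
          (fun r _ => mul_nonneg (hbnn r) (by positivity)) (Finset.mem_univ (⟨0, h0⟩ : Fin (n - 1)))
      have h1 : (0 : ℝ) < β ⟨0, h0⟩ * (Nat.choose (n - (a.1 + 1) - 1) (0 : ℕ) : ℝ) := by
        simpa using hb0 ⟨0, h0⟩ rfl
      exact lt_of_lt_of_le h1 key
    · intro k j hk hj1 hj2
      show 0 ≤ S9.D (phiExt n (Fmap n β)) k j
      rw [S9.forward_id n hn β k j hj1 (by omega)]
      apply Finset.sum_nonneg
      intro r _
      apply mul_nonneg (hbnn r)
      split
      · positivity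
      · exact le_refl 0
  · rintro ⟨hpos, hD⟩
    refine ⟨fun r => S9.D (phiExt n φ) r.1 (n - 1 - r.1), ⟨?_, ?_⟩, ?_⟩
    · intro k hk
      simp only [hk, Nat.sub_zero]
      rw [S9.D_zero]
      unfold phiExt
      rw [dif_pos (show n - 1 - 1 < n - 1 by omega)]
      exact hpos _
    · intro k _
      exact hD k.1 (n - 1 - k.1) (by omega) (by omega) (by omega)
    · funext a
      unfold Fmap
      set j := a.1 + 1 with hj
      set t := n - (a.1 + 1) - 1 with ht
      have step1 : (∑ r : Fin (n - 1), S9.D (phiExt n φ) r.1 (n - 1 - r.1) * (Nat.choose t r.1 : ℝ))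
          = ∑ s ∈ Finset.range (n - 1), S9.D (phiExt n φ) s (n - 1 - s) * (Nat.choose t s : ℝ) :=
        Fin.sum_univ_eq_sum_range (fun s => S9.D (phiExt n φ) s (n - 1 - s) * (Nat.choose t s : ℝ)) (n - 1)
      have step2 : ∑ s ∈ Finset.range (n - 1), S9.D (phiExt n φ) s (n - 1 - s) * (Nat.choose t s : ℝ)
          = ∑ s ∈ Finset.range (t + 1), S9.D (phiExt n φ) s (n - 1 - s) * (Nat.choose t s : ℝ) := by
        symm
        apply Finset.sum_subset (Finset.range_subset_range.2 (by omega))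
        intro s _ hs
        have hts : t < s := by
          simp only [Finset.mem_range, not_lt] at hs
          omega
        rw [Nat.choose_eq_zero_of_lt hts]
        simp
      have step3 := S9.D_inv (phiExt n φ) t 0 j
      have step4 : φ a = S9.D (phiExt n φ) 0 j := by
        rw [S9.D_zero]
        unfold phiExt
        rw [dif_pos (show j - 1 < n - 1 by omega)]
        have : (⟨j - 1, show j - 1 < n - 1 by omega⟩ : Fin (n - 1)) = a := Fin.ext (show j - 1 = a.1 by omega)
        rw [this]
      rw [step1, step2, step4, step3]
      apply Finset.sum_congr rfl
      intro s hs
      have h5 : j + t - s = n - 1 - s := by omega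
      rw [h5, Nat.zero_add, mul_comm]
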